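/- arXiv:2003.06010 — 2 statements merged into one kernel-verified Lean document; each statement's English description precedes it below -/
import Mathlib

section
/- Let U, N : [0,∞) → [0,∞) be differentiable with U' = P − Q and N' = −γ P, where P, Q : [0,∞) → [0,∞) are continuous, γ > 0, and Q(t) ≥ β U(t) for a constant β > 0. Then U ∈ L¹(0,∞) and U(t) → 0 as t → ∞, and N(t) converges to a finite limit N_∞ ≥ 0 as t → ∞. -/
open Set Filter MeasureTheory

/-- An antitone-on-`Ici 0` nonnegative function converges at infinity. -/
lemma antitoneOn_converges {f : ℝ → ℝ} (hf : AntitoneOn f (Ici 0))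
    (hpos : ∀ t ∈ Ici (0:ℝ), 0 ≤ f t) :
    ∃ l : ℝ, 0 ≤ l ∧ Filter.Tendsto f atTop (nhds l) := by
  set g : ℝ → ℝ := fun t => f (max t 0) with hg
  have hganti : Antitone g := by
    intro s t hst
    exact hf (le_max_right s 0) (le_max_right t 0) (max_le_max hst le_rfl)
  have hgpos : ∀ t, 0 ≤ g t := fun t => hpos _ (le_max_right t 0)
  have hbdd : BddBelow (Set.range g) := ⟨0, by rintro x ⟨t, rfl⟩; exact hgpos t⟩
  have htend := tendsto_atTop_ciInf hganti hbdd
  refine ⟨⨅ i, g i, le_ciInf hgpos, htend.congr' ?_⟩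
  filter_upwards [eventually_ge_atTop (0:ℝ)] with t ht
  simp [hg, max_eq_left ht]

/-- Abstract mass convergence: if `U' = P − Q`, `N' = −γP` with `P, Q ≥ 0`,
`Q ≥ βU`, then `U ∈ L¹(0,∞)`, `U(t) → 0`, and `N(t)` converges. -/
theorem stmt_9 (γ β : ℝ) (hγ : 0 < γ) (hβ : 0 < β) (U N P Q : ℝ → ℝ)
    (hUpos : ∀ t ∈ Ici (0:ℝ), 0 ≤ U t) (hNpos : ∀ t ∈ Ici (0:ℝ), 0 ≤ N t)
    (hP : Continuous P) (hQ : Continuous Q)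
    (hPpos : ∀ t ∈ Ici (0:ℝ), 0 ≤ P t) (hQpos : ∀ t ∈ Ici (0:ℝ), 0 ≤ Q t)
    (hU : ∀ t ∈ Ici (0:ℝ), HasDerivAt U (P t - Q t) t)
    (hN : ∀ t ∈ Ici (0:ℝ), HasDerivAt N (-(γ * P t)) t)
    (hQU : ∀ t ∈ Ici (0:ℝ), β * U t ≤ Q t) :
    IntegrableOn U (Ioi 0) ∧
    Tendsto U atTop (nhds 0) ∧
    ∃ Ninf : ℝ, 0 ≤ Ninf ∧ Tendsto N atTop (nhds Ninf) := by
  -- the Lyapunov function W = U + N/γ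
  set W : ℝ → ℝ := fun t => U t + N t / γ with hWdef
  have hW : ∀ t ∈ Ici (0:ℝ), HasDerivAt W (-(Q t)) t := by
    intro t ht
    have := (hU t ht).add ((hN t ht).div_const γ)
    have h2 : P t - Q t + -(γ * P t) / γ = -(Q t) := by
      field_simp
      ring
    rwa [h2] at this
  have hWpos : ∀ t ∈ Ici (0:ℝ), 0 ≤ W t := fun t ht =>
    add_nonneg (hUpos t ht) (div_nonneg (hNpos t ht) hγ.le)
  -- continuity of U and N on Ici 0
  have hUcont : ContinuousOn U (Ici 0) := fun t ht => ((hU t ht).continuousAt).continuousWithinAt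
  have hNcont : ContinuousOn N (Ici 0) := fun t ht => ((hN t ht).continuousAt).continuousWithinAt
  have hWcont : ContinuousOn W (Ici 0) := fun t ht => ((hW t ht).continuousAt).continuousWithinAt
  -- W is antitone on Ici 0
  have hWanti : AntitoneOn W (Ici 0) := by
    have := antitoneOn_of_deriv_nonpos (convex_Ici 0) hWcont
      (fun t ht => (hW t (interior_subset ht)).differentiableAt.differentiableWithinAt ) ?_
    · exact this
    · intro t ht
      rw [interior_Ici] at ht
      rw [(hW t (Set.mem_Ici.2 (le_of_lt (Set.mem_Ioi.1 ht)))).deriv]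
      exact neg_nonpos.2 (hQpos t (Set.mem_Ici.2 (le_of_lt (Set.mem_Ioi.1 ht))))
  have hNanti : AntitoneOn N (Ici 0) := by
    have := antitoneOn_of_deriv_nonpos (convex_Ici 0) hNcont
      (fun t ht => (hN t (interior_subset ht)).differentiableAt.differentiableWithinAt ) ?_
    · exact this
    · intro t ht
      rw [interior_Ici] at ht
      rw [(hN t (Set.mem_Ici.2 (le_of_lt (Set.mem_Ioi.1 ht)))).deriv]
      have := hPpos t (Set.mem_Ici.2 (le_of_lt (Set.mem_Ioi.1 ht)))
      nlinarith
  -- fundamental estimate: ∫_0^T Q = W 0 - W T ≤ W 0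
  have hFTC : ∀ T : ℝ, 0 ≤ T → ∫ t in (0:ℝ)..T, Q t = W 0 - W T := by
    intro T hT
    have : ∫ t in (0:ℝ)..T, -(Q t) = W T - W 0 := by
      apply intervalIntegral.integral_eq_sub_of_hasDerivAt
      · intro t ht
        rw [uIcc_of_le hT] at ht
        exact hW t ht.1
      · exact (hQ.neg).intervalIntegrable 0 T
    have h2 : ∫ t in (0:ℝ)..T, -(Q t) = -∫ t in (0:ℝ)..T, Q t :=
      intervalIntegral.integral_neg
    linarith [this, h2.symm ▸ this]
  -- interval integrability of U
  have hUint : ∀ T : ℝ, 0 ≤ T → IntervalIntegrable U MeasureTheory.volume 0 T := by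
    intro T hT
    exact (hUcont.mono (by rw [uIcc_of_le hT]; exact Icc_subset_Ici_self)).intervalIntegrable
  -- bound on ∫_0^T U
  have hbound : ∀ T : ℝ, 0 ≤ T → ∫ t in (0:ℝ)..T, U t ≤ W 0 / β := by
    intro T hT
    have h1 : ∫ t in (0:ℝ)..T, β * U t ≤ ∫ t in (0:ℝ)..T, Q t := by
      apply intervalIntegral.integral_mono_on hT
      · exact ((hUint T hT).const_mul β)
      · exact hQ.intervalIntegrable 0 T
      · intro t ht
        exact hQU t ht.1
    have h2 : ∫ t in (0:ℝ)..T, β * U t = β * ∫ t in (0:ℝ)..T, U t :=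
      intervalIntegral.integral_const_mul β U
    have h3 := hFTC T hT
    have h4 := hWpos T hT
    rw [h2] at h1
    rw [div_eq_inv_mul, ← inv_mul_cancel_left₀ hβ.ne' (∫ t in (0:ℝ)..T, U t)]
    gcongr
    linarith
  -- integrability of U on Ioi 0
  have hUL1 : IntegrableOn U (Ioi 0) := by
    apply MeasureTheory.integrableOn_Ioi_of_intervalIntegral_norm_bounded (W 0 / β) 0
      (b := fun n : ℕ => (n : ℝ)) (l := atTop)
      (fun n => (hUint n n.cast_nonneg).1)
      tendsto_natCast_atTop_atTop
    filter_upwards with n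
    have : ∫ t in (0:ℝ)..(n:ℝ), ‖U t‖ = ∫ t in (0:ℝ)..(n:ℝ), U t := by
      apply intervalIntegral.integral_congr
      intro t ht
      rw [uIcc_of_le n.cast_nonneg] at ht
      exact Real.norm_of_nonneg (hUpos t ht.1)
    rw [this]
    exact hbound n n.cast_nonneg
  -- W and N converge
  obtain ⟨LW, hLW0, hLW⟩ := antitoneOn_converges hWanti hWpos
  obtain ⟨LN, hLN0, hLN⟩ := antitoneOn_converges hNanti hNpos
  -- hence U converges to L := LW - LN/γ
  have hUconv : Tendsto U atTop (nhds (LW - LN / γ)) := by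
    have := hLW.sub (hLN.div_const γ)
    apply this.congr
    intro t; simp [hWdef]
  -- L ≥ 0
  have hL0 : 0 ≤ LW - LN / γ := by
    apply ge_of_tendsto hUconv
    filter_upwards [eventually_ge_atTop (0:ℝ)] with t ht
    exact hUpos t ht
  -- L ≤ 0 : otherwise U not integrable
  have key : ∀ L : ℝ, Tendsto U atTop (nhds L) → 0 < L → False := by
    intro L hconv h
    have hev : ∀ᶠ t in atTop, L / 2 ≤ U t :=
      hconv.eventually (eventually_ge_nhds (show L/2 < L by linarith))
    obtain ⟨T, hT⟩ := (hev.and (eventually_ge_atTop (0:ℝ))).exists_forall_of_atTop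
    have hTpos : (0:ℝ) ≤ max T 0 := le_max_right T 0
    have hint : IntegrableOn U (Ioi (max T 0)) :=
      hUL1.mono_set (Ioi_subset_Ioi hTpos)
    have hconst : IntegrableOn (fun _ : ℝ => L / 2) (Ioi (max T 0)) := by
      apply Integrable.mono' hint
      · exact aestronglyMeasurable_const
      · filter_upwards [ae_restrict_mem measurableSet_Ioi] with t ht
        have := (hT t (le_of_lt (lt_of_le_of_lt (le_max_left T 0) ht))).1
        rw [Real.norm_of_nonneg (by linarith)]
        exact this
    have hcases : L / 2 = 0 ∨ MeasureTheory.volume (Ioi (max T 0)) < ⊤ := by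
      have := (MeasureTheory.integrable_const_iff (c := L/2)).1 hconst
      rcases this with h | h
      · exact Or.inl h
      · right
        simpa [Measure.restrict_apply_univ] using h.measure_univ_lt_top
    rcases hcases with h1 | h2
    · linarith
    · simp [Real.volume_Ioi] at h2
  have hL0' : LW - LN / γ ≤ 0 := by
    by_contra h
    push_neg at h
    exact key _ hUconv h
  have hLeq : LW - LN / γ = 0 := le_antisymm hL0' hL0
  exact ⟨hUL1, hLeq ▸ hUconv, LN, hLN0, hLN⟩
end

section
/- Let 0 < r₁ < r₂ and define φ : [0,∞) → ℝ by φ(r) = r² for 0 ≤ r ≤ r₁, φ(r) = a₁r² + a₂r + a₃ for r₁ ≤ r ≤ r₂, and φ(r) = r₁r₂ for r > r₂, where a₁ = −r₁/(r₂−r₁), a₂ = 2r₁r₂/(r₂−r₁), a₃ = −r₁²r₂/(r₂−r₁). Then φ is continuously differentiable on [0,∞), φ is nonnegative and nondecreasing, and the radial function Φ(x) = φ(|x|) on ℝ² satisfies ΔΦ(x) = 4 for |x| < r₁ and ΔΦ(x) ≤ 2 for |x| > r₁ (wherever ΔΦ is defined). -/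
open Set
open RealInnerProductSpace

open RealInnerProductSpace in
lemma aux_hasFDerivAt_normSq {E : Type*} [NormedAddCommGroup E] [InnerProductSpace ℝ E] (x : E) :
    HasFDerivAt (fun z : E => ‖z‖ ^ 2) ((2:ℝ) • innerSL ℝ x) x := by
  have h := (hasFDerivAt_id x).inner ℝ (hasFDerivAt_id x)
  have hfun : (fun z : E => ⟪id z, id z⟫) = fun z : E => ‖z‖ ^ 2 := by
    funext z; simp [real_inner_self_eq_norm_sq]
  rw [hfun] at h
  refine h.congr_fderiv ?_
  ext e
  simp [fderivInnerCLM_apply, real_inner_comm]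
  ring

open RealInnerProductSpace in
lemma aux_hasFDerivAt_norm {E : Type*} [NormedAddCommGroup E] [InnerProductSpace ℝ E]
    {x : E} (hx : x ≠ 0) :
    HasFDerivAt (fun z : E => ‖z‖) (‖x‖⁻¹ • innerSL ℝ x) x := by
  have hnx : (0:ℝ) < ‖x‖ := norm_pos_iff.mpr hx
  have h1 : HasDerivAt Real.sqrt (1 / (2 * Real.sqrt (‖x‖ ^ 2))) (‖x‖ ^ 2) :=
    Real.hasDerivAt_sqrt (by positivity)
  have h2 := h1.comp_hasFDerivAt x (aux_hasFDerivAt_normSq x)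
  have hfun : (Real.sqrt ∘ fun z : E => ‖z‖ ^ 2) = fun z : E => ‖z‖ := by
    funext z; simp [Real.sqrt_sq (norm_nonneg z)]
  rw [hfun] at h2
  refine h2.congr_fderiv ?_
  ext e
  simp [Real.sqrt_sq hnx.le]
  field_simp

lemma aux_lap_local {E : Type*} [NormedAddCommGroup E] [NormedSpace ℝ E]
    {Φ ρ : E → ℝ} {U : Set E} {x : E} (hU : IsOpen U) (hx : x ∈ U)
    (hcong : ∀ y ∈ U, Φ y = ρ y)
    {F : E → (E →L[ℝ] ℝ)} (hρ : ∀ y ∈ U, HasFDerivAt ρ (F y) y)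
    (e : E) {G : E →L[ℝ] ℝ} (hF : HasFDerivAt (fun y => F y e) G x) :
    fderiv ℝ (fun y : E => fderiv ℝ Φ y e) x = G := by
  have key : ∀ y ∈ U, fderiv ℝ Φ y = F y := fun y hy => by
    have h1 : Φ =ᶠ[nhds y] ρ := Filter.eventuallyEq_of_mem (hU.mem_nhds hy) hcong
    rw [h1.fderiv_eq, (hρ y hy).fderiv]
  have h2 : (fun y : E => fderiv ℝ Φ y e) =ᶠ[nhds x] fun y => F y e :=
    Filter.eventually_of_mem (hU.mem_nhds hx) fun y hy => by simp only [key y hy]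
  rw [h2.fderiv_eq, hF.fderiv]

set_option maxHeartbeats 1600000 in
/-- The truncated second-moment weight: `φ(r) = r²` on `[0,r₁]`,
`φ(r) = a₁r² + a₂r + a₃` on `[r₁,r₂]`, `φ(r) = r₁r₂` beyond. It is `C¹`,
nonnegative and nondecreasing, and the radial function `Φ(x) = φ(|x|)` on `ℝ²`
has Laplacian (sum of second partial derivatives) equal to `4` for `|x| < r₁`
and `≤ 2` for `|x| > r₁` wherever it is defined (`|x| ≠ r₂`). -/
theorem stmt_13 (r₁ r₂ : ℝ) (h₁ : 0 < r₁) (h₁₂ : r₁ < r₂)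
    (a₁ a₂ a₃ : ℝ)
    (ha₁ : a₁ = -r₁ / (r₂ - r₁)) (ha₂ : a₂ = 2 * r₁ * r₂ / (r₂ - r₁))
    (ha₃ : a₃ = -(r₁ ^ 2) * r₂ / (r₂ - r₁))
    (φ : ℝ → ℝ)
    (hφ : ∀ r : ℝ, φ r =
      if r ≤ r₁ then r ^ 2
      else if r ≤ r₂ then a₁ * r ^ 2 + a₂ * r + a₃
      else r₁ * r₂) :
    ContDiffOn ℝ 1 φ (Ici 0) ∧
    (∀ r ∈ Ici (0:ℝ), 0 ≤ φ r) ∧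
    MonotoneOn φ (Ici 0) ∧
    (∀ x : EuclideanSpace ℝ (Fin 2), ‖x‖ < r₁ →
      (∑ i : Fin 2,
        fderiv ℝ (fun y : EuclideanSpace ℝ (Fin 2) =>
          fderiv ℝ (fun z : EuclideanSpace ℝ (Fin 2) => φ ‖z‖) y
            (EuclideanSpace.single i 1)) x (EuclideanSpace.single i 1)) = 4) ∧
    (∀ x : EuclideanSpace ℝ (Fin 2), r₁ < ‖x‖ → ‖x‖ ≠ r₂ →
      (∑ i : Fin 2,
        fderiv ℝ (fun y : EuclideanSpace ℝ (Fin 2) =>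
          fderiv ℝ (fun z : EuclideanSpace ℝ (Fin 2) => φ ‖z‖) y
            (EuclideanSpace.single i 1)) x (EuclideanSpace.single i 1)) ≤ 2) := by
  have hd : (0:ℝ) < r₂ - r₁ := by linarith
  have hdne : r₂ - r₁ ≠ 0 := ne_of_gt hd
  have hv1 : a₁ * r₁ ^ 2 + a₂ * r₁ + a₃ = r₁ ^ 2 := by
    rw [ha₁, ha₂, ha₃]; field_simp; ring
  have hv2 : a₁ * r₂ ^ 2 + a₂ * r₂ + a₃ = r₁ * r₂ := by
    rw [ha₁, ha₂, ha₃]; field_simp; ring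
  have hd1 : 2 * a₁ * r₁ + a₂ = 2 * r₁ := by
    rw [ha₁, ha₂]; field_simp; try ring
  have hd2 : 2 * a₁ * r₂ + a₂ = 0 := by
    rw [ha₁, ha₂]; field_simp; try ring
  set ψ : ℝ → ℝ := fun r => if r ≤ r₁ then 2 * r else if r ≤ r₂ then 2 * a₁ * r + a₂ else 0
    with hψ
  have hsq : ∀ r : ℝ, HasDerivAt (fun t : ℝ => t ^ 2) (2 * r) r := fun r => by
    simpa using hasDerivAt_pow 2 r
  have hpoly : ∀ r : ℝ, HasDerivAt (fun t : ℝ => a₁ * t ^ 2 + a₂ * t + a₃)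
      (2 * a₁ * r + a₂) r := fun r => by
    have h := (((hsq r).const_mul a₁).add ((hasDerivAt_id r).const_mul a₂)).add_const a₃
    exact h.congr_deriv (by ring)
  have hder : ∀ r : ℝ, HasDerivAt φ (ψ r) r := by
    intro r
    rcases lt_trichotomy r r₁ with hr | hr | hr
    · -- r < r₁
      have h0 : ψ r = 2 * r := by simp [hψ, hr.le]
      rw [h0]
      refine (hsq r).congr_of_eventuallyEq ?_
      filter_upwards [Iio_mem_nhds hr] with y hy
      rw [hφ y, if_pos hy.le]
    · -- r = r₁
      subst hr
      have hψr : ψ r = 2 * r := by simp [hψ]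
      rw [hψr, ← hasDerivWithinAt_univ, ← Iic_union_Ici (a := r)]
      refine HasDerivWithinAt.union ?_ ?_
      · refine ((hsq r).hasDerivWithinAt).congr (fun y hy => ?_) ?_
        · rw [hφ y, if_pos (mem_Iic.mp hy)]
        · rw [hφ r, if_pos le_rfl]
      · have h2 : HasDerivWithinAt (fun t : ℝ => a₁ * t ^ 2 + a₂ * t + a₃)
            (2 * r) (Ici r) r := by
          have := (hpoly r).hasDerivWithinAt (s := Ici r)
          rwa [hd1] at this
        refine h2.congr_of_eventuallyEq ?_ ?_
        · have hmem : Ici r ∩ Iic r₂ ∈ nhdsWithin r (Ici r) :=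
            Filter.inter_mem self_mem_nhdsWithin
              (nhdsWithin_le_nhds (Iic_mem_nhds (by linarith)))
          filter_upwards [hmem] with y hy
          rcases eq_or_lt_of_le (mem_Ici.mp hy.1) with h | h
          · rw [hφ y, ← h, if_pos le_rfl]; exact hv1.symm
          · rw [hφ y, if_neg (not_le.mpr h), if_pos (mem_Iic.mp hy.2)]
        · rw [hφ r, if_pos le_rfl]; exact hv1.symm
    · -- r₁ < r
      rcases lt_trichotomy r r₂ with hr2 | hr2 | hr2
      · have h0 : ψ r = 2 * a₁ * r + a₂ := by simp [hψ, not_le_of_gt hr, hr2.le]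
        rw [h0]
        refine (hpoly r).congr_of_eventuallyEq ?_
        filter_upwards [Ioo_mem_nhds hr hr2] with y hy
        rw [hφ y, if_neg (not_le_of_gt hy.1), if_pos hy.2.le]
      · subst hr2
        have hψr : ψ r = 0 := by simp [hψ, not_le_of_gt hr, hd2]
        rw [hψr, ← hasDerivWithinAt_univ, ← Iic_union_Ici (a := r)]
        refine HasDerivWithinAt.union ?_ ?_
        · have h2 : HasDerivWithinAt (fun t : ℝ => a₁ * t ^ 2 + a₂ * t + a₃)
              (0 : ℝ) (Iic r) r := by
            have := (hpoly r).hasDerivWithinAt (s := Iic r)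
            rwa [hd2] at this
          refine h2.congr_of_eventuallyEq ?_ ?_
          · have hmem : Ioi r₁ ∩ Iic r ∈ nhdsWithin r (Iic r) :=
              Filter.inter_mem (nhdsWithin_le_nhds (Ioi_mem_nhds hr)) self_mem_nhdsWithin
            filter_upwards [hmem] with y hy
            rw [hφ y, if_neg (not_le_of_gt hy.1), if_pos (mem_Iic.mp hy.2)]
          · rw [hφ r, if_neg (not_le_of_gt hr), if_pos le_rfl]
        · refine (hasDerivWithinAt_const r _ (r₁ * r)).congr (fun y hy => ?_) ?_
          · rcases eq_or_lt_of_le (mem_Ici.mp hy) with h | h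
            · rw [hφ y, ← h, if_neg (not_le_of_gt hr), if_pos le_rfl]; exact hv2
            · rw [hφ y, if_neg (not_le_of_gt (lt_trans hr h)), if_neg (not_le_of_gt h)]
          · rw [hφ r, if_neg (not_le_of_gt hr), if_pos le_rfl]; exact hv2
      · have h0 : ψ r = 0 := by simp [hψ, not_le_of_gt hr, not_le_of_gt hr2]
        rw [h0]
        refine (hasDerivAt_const r (r₁ * r₂)).congr_of_eventuallyEq ?_
        filter_upwards [Ioi_mem_nhds hr2] with y hy
        rw [hφ y, if_neg (by simp at hy ⊢; linarith), if_neg (not_le_of_gt hy)]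
  have hdiff : Differentiable ℝ φ := fun r => (hder r).differentiableAt
  have hderiv : deriv φ = ψ := funext fun r => (hder r).deriv
  have hψcont : Continuous ψ := by
    rw [hψ]
    refine Continuous.if_le ?_ ?_ continuous_id continuous_const ?_
    · exact continuous_const.mul continuous_id
    · refine Continuous.if_le ?_ continuous_const continuous_id continuous_const ?_
      · exact (continuous_const.mul continuous_id).add continuous_const
      · rintro x rfl; exact hd2
    · rintro x rfl
      rw [if_pos h₁₂.le]; exact hd1.symm
  have hcd : ContDiff ℝ 1 φ := contDiff_one_iff_deriv.mpr ⟨hdiff, hderiv ▸ hψcont⟩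
  have hψnn : ∀ r : ℝ, 0 ≤ r → 0 ≤ ψ r := by
    intro r hr
    rw [hψ]
    dsimp only
    split_ifs with hA hB
    · linarith
    · have hform : 2 * a₁ * r + a₂ = 2 * r₁ * (r₂ - r) / (r₂ - r₁) := by
        rw [ha₁, ha₂]; field_simp; ring
      rw [hform]
      apply div_nonneg _ hd.le
      nlinarith
    · exact le_rfl
  have hmono : MonotoneOn φ (Ici 0) := by
    apply monotoneOn_of_deriv_nonneg (convex_Ici 0) hcd.continuous.continuousOn
      hdiff.differentiableOn
    intro x hx
    rw [interior_Ici] at hx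
    rw [hderiv]
    exact hψnn x hx.le
  have hnonneg : ∀ r ∈ Ici (0:ℝ), 0 ≤ φ r := by
    intro r hr
    have h0 : φ 0 = 0 := by rw [hφ 0, if_pos h₁.le]; norm_num
    calc (0:ℝ) = φ 0 := h0.symm
      _ ≤ φ r := hmono self_mem_Ici hr (mem_Ici.mp hr)
  refine ⟨hcd.contDiffOn, hnonneg, hmono, ?_, ?_⟩
  · intro x hx
    have hU : IsOpen {z : EuclideanSpace ℝ (Fin 2) | ‖z‖ < r₁} := isOpen_lt continuous_norm continuous_const
    have hcong : ∀ y ∈ {z : EuclideanSpace ℝ (Fin 2) | ‖z‖ < r₁}, φ ‖y‖ = ‖y‖ ^ 2 := fun y hy => by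
      rw [hφ ‖y‖, if_pos (le_of_lt hy)]
    have key : ∀ i : Fin 2,
        fderiv ℝ (fun y : EuclideanSpace ℝ (Fin 2) => fderiv ℝ (fun z : EuclideanSpace ℝ (Fin 2) => φ ‖z‖) y (EuclideanSpace.single i 1)) x
          = (2:ℝ) • ((innerSL ℝ).flip (EuclideanSpace.single i 1)) := by
      intro i
      have base := ((innerSL ℝ (E := EuclideanSpace ℝ (Fin 2))).flip (EuclideanSpace.single i 1)).hasFDerivAt (x := x)
      have hF : HasFDerivAt
          (fun y : EuclideanSpace ℝ (Fin 2) => ((2:ℝ) • innerSL ℝ y) (EuclideanSpace.single i 1))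
          ((2:ℝ) • ((innerSL ℝ).flip (EuclideanSpace.single i 1))) x := by
        refine (base.const_mul (2:ℝ)).congr_of_eventuallyEq ?_
        refine Filter.EventuallyEq.of_eq (funext fun y => ?_)
        simp only [ContinuousLinearMap.smul_apply, smul_eq_mul, ContinuousLinearMap.flip_apply]
      exact aux_lap_local hU hx hcong (F := fun y => (2:ℝ) • innerSL ℝ y)
        (fun y _ => aux_hasFDerivAt_normSq y) _ hF
    simp only [key, ContinuousLinearMap.smul_apply, smul_eq_mul,
      ContinuousLinearMap.flip_apply, innerSL_apply_apply, real_inner_self_eq_norm_sq,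
      EuclideanSpace.norm_single, Fin.sum_univ_two]
    norm_num
  · intro x hx hxne
    rcases lt_or_gt_of_ne hxne with hx2 | hx2
    · -- r₁ < ‖x‖ < r₂
      set U : Set (EuclideanSpace ℝ (Fin 2)) := {z | r₁ < ‖z‖ ∧ ‖z‖ < r₂} with hUdef
      have hU : IsOpen U :=
        (isOpen_lt continuous_const continuous_norm).inter
          (isOpen_lt continuous_norm continuous_const)
      have hxU : x ∈ U := ⟨hx, hx2⟩
      have hcong : ∀ y ∈ U, φ ‖y‖ = a₁ * ‖y‖ ^ 2 + a₂ * ‖y‖ + a₃ := fun y hy => by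
        rw [hφ ‖y‖, if_neg (not_le_of_gt hy.1), if_pos hy.2.le]
      have hx0 : x ≠ 0 := by
        intro h; rw [h] at hx; simp at hx; linarith
      have hnx : (0:ℝ) < ‖x‖ := norm_pos_iff.mpr hx0
      have hρ : ∀ y ∈ U, HasFDerivAt (fun z : EuclideanSpace ℝ (Fin 2) =>
          a₁ * ‖z‖ ^ 2 + a₂ * ‖z‖ + a₃)
          (a₁ • ((2:ℝ) • innerSL ℝ y) + a₂ • (‖y‖⁻¹ • innerSL ℝ y)) y := by
        intro y hy
        have hy0 : y ≠ 0 := by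
          intro h; rw [h] at hy; simp [hUdef] at hy; linarith [hy.1]
        exact (((aux_hasFDerivAt_normSq y).const_mul a₁).add
          ((aux_hasFDerivAt_norm hy0).const_mul a₂)).add_const a₃
      -- derivative of y ↦ F y e at x
      have key : ∀ i : Fin 2,
          (fderiv ℝ (fun y : EuclideanSpace ℝ (Fin 2) =>
            fderiv ℝ (fun z : EuclideanSpace ℝ (Fin 2) => φ ‖z‖) y
              (EuclideanSpace.single i 1)) x) (EuclideanSpace.single i 1)
          = a₁ * (2 * ⟪EuclideanSpace.single i (1:ℝ), EuclideanSpace.single i (1:ℝ)⟫)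
              + a₂ * (‖x‖⁻¹ * ⟪EuclideanSpace.single i (1:ℝ), EuclideanSpace.single i (1:ℝ)⟫
                + ⟪x, EuclideanSpace.single i (1:ℝ)⟫
                  * (-(‖x‖ ^ 2)⁻¹ * (‖x‖⁻¹ * ⟪x, EuclideanSpace.single i (1:ℝ)⟫))) := by
        intro i
        set e := EuclideanSpace.single (𝕜 := ℝ) i (1:ℝ) with he
        set L : EuclideanSpace ℝ (Fin 2) →L[ℝ] ℝ := (innerSL ℝ).flip e with hL
        have Lh : HasFDerivAt (fun y => L y) L x := L.hasFDerivAt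
        have hinv : HasFDerivAt (fun y : EuclideanSpace ℝ (Fin 2) => ‖y‖⁻¹)
            ((-(‖x‖ ^ 2)⁻¹) • (‖x‖⁻¹ • innerSL ℝ x)) x := by
          have := (hasDerivAt_inv (ne_of_gt hnx)).comp_hasFDerivAt x (aux_hasFDerivAt_norm hx0)
          exact this
        have hmul : HasFDerivAt (fun y : EuclideanSpace ℝ (Fin 2) => ‖y‖⁻¹ * L y)
            (‖x‖⁻¹ • L + (L x) • ((-(‖x‖ ^ 2)⁻¹) • (‖x‖⁻¹ • innerSL ℝ x))) x := hinv.mul Lh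
        have hA := (Lh.const_mul (2:ℝ)).const_mul a₁
        have hB := hmul.const_mul a₂
        have hTot := hA.add hB
        have hF : HasFDerivAt
            (fun y : EuclideanSpace ℝ (Fin 2) =>
              (a₁ • ((2:ℝ) • innerSL ℝ y) + a₂ • (‖y‖⁻¹ • innerSL ℝ y)) e)
            (a₁ • ((2:ℝ) • L) + a₂ • (‖x‖⁻¹ • L + (L x) • ((-(‖x‖ ^ 2)⁻¹) • (‖x‖⁻¹ • innerSL ℝ x)))) x := by
          refine hTot.congr_of_eventuallyEq ?_
          refine Filter.EventuallyEq.of_eq (funext fun y => ?_)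
          simp only [ContinuousLinearMap.add_apply, ContinuousLinearMap.smul_apply,
            smul_eq_mul, hL, ContinuousLinearMap.flip_apply, Pi.add_apply]
        rw [aux_lap_local hU hxU hcong hρ e hF]
        simp only [ContinuousLinearMap.add_apply, ContinuousLinearMap.smul_apply, smul_eq_mul,
          hL, ContinuousLinearMap.flip_apply, innerSL_apply_apply]
      simp only [Fin.sum_univ_two]
      rw [key 0, key 1]
      have hinner : ∀ i : Fin 2, ⟪x, EuclideanSpace.single i (1:ℝ)⟫ = x i := fun i => by
        simp [EuclideanSpace.inner_single_right]
      have hself : ∀ i : Fin 2,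
          ⟪EuclideanSpace.single i (1:ℝ), EuclideanSpace.single (𝕜 := ℝ) i (1:ℝ)⟫ = 1 := fun i => by
        rw [real_inner_self_eq_norm_sq]; simp
      rw [hinner 0, hinner 1, hself 0, hself 1]
      have hxn : x 0 ^ 2 + x 1 ^ 2 = ‖x‖ ^ 2 := by
        have := EuclideanSpace.norm_eq x
        rw [this, Real.sq_sqrt (by positivity)]
        simp [Fin.sum_univ_two, sq_abs]
      have hrne : ‖x‖ ≠ 0 := ne_of_gt hnx
      have hstep : a₁ * (2 * 1) + a₂ * (‖x‖⁻¹ * 1 + x 0 * (-(‖x‖ ^ 2)⁻¹ * (‖x‖⁻¹ * x 0)))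
          + (a₁ * (2 * 1) + a₂ * (‖x‖⁻¹ * 1 + x 1 * (-(‖x‖ ^ 2)⁻¹ * (‖x‖⁻¹ * x 1))))
          = 4 * a₁ + a₂ * ‖x‖⁻¹ := by
        have h0 : a₁ * (2 * 1) + a₂ * (‖x‖⁻¹ * 1 + x 0 * (-(‖x‖ ^ 2)⁻¹ * (‖x‖⁻¹ * x 0)))
            + (a₁ * (2 * 1) + a₂ * (‖x‖⁻¹ * 1 + x 1 * (-(‖x‖ ^ 2)⁻¹ * (‖x‖⁻¹ * x 1))))
            = 4 * a₁ + a₂ * (2 * ‖x‖⁻¹ - (x 0 ^ 2 + x 1 ^ 2) * ((‖x‖ ^ 2)⁻¹ * ‖x‖⁻¹)) := by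
          ring
        rw [h0, hxn]
        field_simp
        ring
      rw [hstep]
      have hd : (0:ℝ) < r₂ - r₁ := by linarith
      have hEq : 4 * a₁ + a₂ * ‖x‖⁻¹ = (2 * r₁ * r₂ - 4 * r₁ * ‖x‖) / ((r₂ - r₁) * ‖x‖) := by
        rw [ha₁, ha₂]; field_simp; ring
      rw [hEq, div_le_iff₀ (by positivity)]
      nlinarith [hx, h₁, hnx, h₁₂]
    · -- r₂ < ‖x‖
      have hU : IsOpen {z : EuclideanSpace ℝ (Fin 2) | r₂ < ‖z‖} :=
        isOpen_lt continuous_const continuous_norm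
      have hcong : ∀ y ∈ {z : EuclideanSpace ℝ (Fin 2) | r₂ < ‖z‖}, φ ‖y‖ = r₁ * r₂ := fun y hy => by
        rw [hφ ‖y‖, if_neg (by push_neg; linarith [mem_setOf.mp hy]),
          if_neg (not_le_of_gt hy)]
      have key : ∀ i : Fin 2,
          fderiv ℝ (fun y : EuclideanSpace ℝ (Fin 2) =>
            fderiv ℝ (fun z : EuclideanSpace ℝ (Fin 2) => φ ‖z‖) y
              (EuclideanSpace.single i 1)) x = 0 := by
        intro i
        refine aux_lap_local hU hx2 hcong
          (F := fun _ => (0 : EuclideanSpace ℝ (Fin 2) →L[ℝ] ℝ))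
          (fun y _ => hasFDerivAt_const (r₁ * r₂) y) _ ?_
        simpa using hasFDerivAt_const (0:ℝ) x
      simp [key]
end
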